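/- Let (N,v) be a TU game with veto player a and empty core (so ε* < 0). Suppose ε* = ε̂ := min{ (v(N)−v(S))/(|N|−|S|+1) : S proper, a ∈ S } is attained at Ŝ. Then |Ŝ| = |N|−1, and the unique player k ∉ Ŝ satisfies: v(N) ≥ v(S) + ε̂ for every proper S with a ∈ S and k ∈ S, and v(N) ≥ v(S) + 2ε̂ for every proper S with a ∈ S and k ∉ S. -/
import Mathlib


open Finset

/-- The strong ε-core of a TU game. -/
def epsCore {ι : Type*} [Fintype ι] [DecidableEq ι] (v : Finset ι → ℝ) (ε : ℝ) :
    Set (ι → ℝ) :=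
  {x | (∑ i, x i) = v Finset.univ ∧
    ∀ S : Finset ι, S.Nonempty → S ≠ Finset.univ → v S + ε ≤ ∑ i ∈ S, x i}

/-- The least core value: the largest ε for which the strong ε-core is nonempty. -/
noncomputable def lcv {ι : Type*} [Fintype ι] [DecidableEq ι] (v : Finset ι → ℝ) : ℝ :=
  sSup {ε : ℝ | (epsCore v ε).Nonempty}

/-- The set of proper coalitions containing the player `a`. -/
def Pa {ι : Type*} [Fintype ι] [DecidableEq ι] (a : ι) : Finset (Finset ι) :=
  Finset.univ.filter (fun S => a ∈ S ∧ S ≠ Finset.univ)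

/-- The quantity `(v(N) − v(S))/(|N| − |S| + 1)`. -/
noncomputable def excessRatio {ι : Type*} [Fintype ι] [DecidableEq ι]
    (v : Finset ι → ℝ) (S : Finset ι) : ℝ :=
  (v Finset.univ - v S) / ((Fintype.card ι : ℝ) - (S.card : ℝ) + 1)

/-- ('Only if' direction of the unbalanced characterization.) Suppose the core is
empty and `ε* = ε̂ = min{(v(N)−v(S))/(|N|−|S|+1) : S proper, a ∈ S}` is attained
at `Ŝ`. Then `|Ŝ| = |N| − 1` and the unique player `k ∉ Ŝ` satisfies
`v(N) ≥ v(S) + ε̂` for every proper `S ∋ a` with `k ∈ S`, and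
`v(N) ≥ v(S) + 2ε̂` for every proper `S ∋ a` with `k ∉ S`. -/
theorem stmt18 {ι : Type*} [Fintype ι] [DecidableEq ι] (v : Finset ι → ℝ) (a : ι)
    (hcard : 3 ≤ Fintype.card ι)
    (hempty : v ∅ = 0)
    (hveto : ∀ S : Finset ι, a ∉ S → v S = 0)
    (hcore : ¬ (epsCore v 0).Nonempty)
    (hPa : (Pa a).Nonempty)
    (εhat : ℝ) (hεhat : εhat = (Pa a).inf' hPa (excessRatio v))
    (Shat : Finset ι) (hShat : Shat ∈ Pa a)
    (hattain : excessRatio v Shat = εhat)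
    (hstar : lcv v = εhat) :
    Shat.card = Fintype.card ι - 1 ∧
    ∀ k : ι, k ∉ Shat →
      ((∀ S : Finset ι, S.Nonempty → S ≠ Finset.univ → a ∈ S → k ∈ S →
          v S + εhat ≤ v Finset.univ) ∧
       (∀ S : Finset ι, S.Nonempty → S ≠ Finset.univ → a ∈ S → k ∉ S →
          v S + 2 * εhat ≤ v Finset.univ)) := by
  classical
  obtain ⟨haS, hSu⟩ : a ∈ Shat ∧ Shat ≠ univ := by
    simpa [Pa, Finset.mem_filter] using hShat
  have hinf : ∀ S : Finset ι, a ∈ S → S ≠ univ → εhat ≤ excessRatio v S := by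
    intro S h1 h2
    rw [hεhat]
    exact Finset.inf'_le _ (by simp [Pa, Finset.mem_filter, h1, h2])
  have hcardS : ∀ S : Finset ι, S ≠ univ → S.card < Fintype.card ι := by
    intro S h
    have := Finset.card_lt_card (Finset.ssubset_univ_iff.mpr h)
    simpa using this
  -- ε̂ < 0 (otherwise giving everything to the veto player is in the core)
  have hneg : εhat < 0 := by
    by_contra h
    push_neg at h
    apply hcore
    refine ⟨fun i => if i = a then v univ else 0, ?_, ?_⟩
    · simp
    · intro S hSne hSu'
      have hsum : (∑ i ∈ S, (if i = a then v univ else 0)) =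
          if a ∈ S then v univ else 0 := by
        simp [Finset.sum_ite_eq' S a (fun _ => v univ)]
      rw [hsum]
      by_cases haS' : a ∈ S
      · have h1 := hinf S haS' hSu'
        have hlt := hcardS S hSu'
        have hltR : (S.card : ℝ) < (Fintype.card ι : ℝ) := by exact_mod_cast hlt
        have hd : (0:ℝ) < (Fintype.card ι : ℝ) - (S.card : ℝ) + 1 := by linarith
        have h2 : 0 ≤ (v univ - v S) / ((Fintype.card ι : ℝ) - (S.card : ℝ) + 1) := by
          have := le_trans h h1
          simpa [excessRatio] using this
        have h3 : 0 ≤ v univ - v S := by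
          by_contra hc
          push_neg at hc
          have : (v univ - v S) / ((Fintype.card ι : ℝ) - (S.card : ℝ) + 1) < 0 :=
            div_neg_of_neg_of_pos (by linarith) hd
          linarith
        rw [if_pos haS']
        linarith
      · rw [if_neg haS', hveto S haS']
        norm_num
  set E := {ε : ℝ | (epsCore v ε).Nonempty} with hE
  have hlcvE : lcv v = sSup E := rfl
  have hEne : E.Nonempty := by
    by_contra h
    rw [Set.not_nonempty_iff_eq_empty] at h
    have : lcv v = 0 := by rw [hlcvE, h, Real.sSup_empty]
    rw [hstar] at this
    linarith
  -- key inequality: for all proper S ∋ a and feasible ε, v S + 2ε ≤ v N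
  have key : ∀ S : Finset ι, S ≠ univ → a ∈ S →
      ∀ ε ∈ E, v S + 2 * ε ≤ v univ := by
    intro S hSu' haS' ε hε
    obtain ⟨x, hx1, hx2⟩ := hε
    have h1 := hx2 S ⟨a, haS'⟩ hSu'
    have hcne : Sᶜ.Nonempty := by
      rw [← Finset.card_pos, Finset.card_compl]
      have := hcardS S hSu'
      omega
    have hcu : Sᶜ ≠ univ := by
      intro h
      have : a ∈ Sᶜ := h ▸ Finset.mem_univ a
      simp [haS'] at this
    have h2 := hx2 Sᶜ hcne hcu
    rw [hveto Sᶜ (by simp [haS'])] at h2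
    have h3 := Finset.sum_compl_add_sum S x
    rw [hx1] at h3
    linarith
  have hau : ({a} : Finset ι) ≠ univ := by
    intro h
    have h2 : Fintype.card ι = 1 := by
      rw [← Finset.card_univ, ← h, Finset.card_singleton]
    omega
  have hEbdd : BddAbove E := by
    refine ⟨(v univ - v {a}) / 2, fun ε hε => ?_⟩
    have h1 := key {a} hau (Finset.mem_singleton_self a) ε hε
    linarith
  have hsup : ∀ c : ℝ, (∀ ε ∈ E, ε ≤ c) → εhat ≤ c := by
    intro c h
    rw [← hstar, hlcvE]
    exact csSup_le hEne h
  -- the value of v Shat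
  have hltS := hcardS Shat hSu
  have hltSR : (Shat.card : ℝ) < (Fintype.card ι : ℝ) := by exact_mod_cast hltS
  have hd0 : ((Fintype.card ι : ℝ) - (Shat.card : ℝ) + 1) ≠ 0 := by linarith
  have hD : v univ - v Shat = εhat * ((Fintype.card ι : ℝ) - (Shat.card : ℝ) + 1) := by
    have h := hattain
    rw [excessRatio] at h
    exact (div_eq_iff hd0).mp h
  -- the cardinality of Shat
  have hScard : Shat.card = Fintype.card ι - 1 := by
    have h2 : εhat ≤ (v univ - v Shat) / 2 := by
      apply hsup
      intro ε hε
      have := key Shat hSu haS ε hε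
      linarith
    have h3 : (Fintype.card ι : ℝ) - (Shat.card : ℝ) + 1 ≤ 2 := by
      by_contra hcon
      push_neg at hcon
      have := mul_lt_mul_of_neg_left hcon hneg
      rw [hD] at h2
      nlinarith
    have h4 : (Fintype.card ι : ℝ) ≤ (Shat.card : ℝ) + 1 := by linarith
    have h5 : Fintype.card ι ≤ Shat.card + 1 := by exact_mod_cast h4
    omega
  refine ⟨hScard, ?_⟩
  intro k hk
  have hak : a ≠ k := fun h => hk (h ▸ haS)
  have hcompl : Shatᶜ = {k} := by
    have h1 : Shatᶜ.card = 1 := by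
      rw [Finset.card_compl, hScard]
      omega
    obtain ⟨b, hb⟩ := Finset.card_eq_one.mp h1
    have hkc : k ∈ Shatᶜ := Finset.mem_compl.mpr hk
    rw [hb, Finset.mem_singleton] at hkc
    rw [hb, hkc]
  have hvS : v univ - v Shat = 2 * εhat := by
    have hcast : ((Fintype.card ι - 1 : ℕ) : ℝ) = (Fintype.card ι : ℝ) - 1 := by
      have h1 : 1 ≤ Fintype.card ι := by omega
      push_cast [h1]
      ring
    rw [hD, hScard, hcast]
    ring
  constructor
  · -- S proper, a ∈ S, k ∈ S
    intro S hSne hSu' haS' hkS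
    have hb : ∀ ε ∈ E, ε ≤ (v univ - v S + 2 * εhat) / 3 := by
      intro ε hε
      obtain ⟨x, hx1, hx2⟩ := hε
      -- bound on x k
      have hSh := hx2 Shat ⟨a, haS⟩ hSu
      have hsum1 := Finset.sum_compl_add_sum Shat x
      rw [hx1, hcompl, Finset.sum_singleton] at hsum1
      have hxk : x k ≤ 2 * εhat - ε := by linarith
      -- the coalition Sᶜ ∪ {k}
      have haT : a ∉ Sᶜ ∪ {k} := by
        simp [haS', hak]
      have hTu : Sᶜ ∪ {k} ≠ univ := fun h => haT (h ▸ Finset.mem_univ a)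
      have hT := hx2 (Sᶜ ∪ {k}) ⟨k, by simp⟩ hTu
      rw [hveto _ haT] at hT
      have hTc : (S.erase k)ᶜ = Sᶜ ∪ {k} := by
        ext i
        by_cases hik : i = k <;> simp [Finset.mem_erase, Finset.mem_compl, hik, hkS]
      have hsum2 := Finset.sum_compl_add_sum (S.erase k) x
      rw [hx1, hTc] at hsum2
      have hsum3 := Finset.sum_erase_add S x hkS
      have hS := hx2 S hSne hSu'
      linarith
    have := hsup _ hb
    linarith
  · -- S proper, a ∈ S, k ∉ S
    intro S hSne hSu' haS' _
    have hb : ∀ ε ∈ E, ε ≤ (v univ - v S) / 2 := by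
      intro ε hε
      have := key S hSu' haS' ε hε
      linarith
    have := hsup _ hb
    linarith
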